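/- Let a < 0 and b ∈ (−1, 1). Consider the initial value problem w'' = (1/2)(t w' − w)(1 − (w')²), w(0) = a, w'(0) = b. Along any solution with |w'| < 1, the function φ(t) := t w'(t) − w(t) satisfies φ'(t) = (t/2)(1 − (w'(t))²) φ(t); hence φ(t) = φ(0) e^{f(t)} where f(t) := ∫_0^t (s/2)(1 − (w'(s))²) ds ≥ 0, and in particular φ(t) ≥ −a > 0 for all t in the existence interval. -/

import Mathlib

open Set intervalIntegral

theorem stmt10 (a b T₁ T₂ : ℝ) (ha : a < 0) (hb : b ∈ Set.Ioo (-1 : ℝ) 1)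
    (hT₁ : T₁ < 0) (hT₂ : 0 < T₂)
    (w dw : ℝ → ℝ)
    (hw : ∀ t ∈ Set.Ioo T₁ T₂, HasDerivAt w (dw t) t)
    (hODE : ∀ t ∈ Set.Ioo T₁ T₂,
      HasDerivAt dw ((1 / 2) * (t * dw t - w t) * (1 - (dw t) ^ 2)) t)
    (hspace : ∀ t ∈ Set.Ioo T₁ T₂, |dw t| < 1)
    (hw0 : w 0 = a) (hdw0 : dw 0 = b) :
    (∀ t ∈ Set.Ioo T₁ T₂,
      HasDerivAt (fun t => t * dw t - w t)
        ((t / 2) * (1 - (dw t) ^ 2) * (t * dw t - w t)) t) ∧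
    (∀ t ∈ Set.Ioo T₁ T₂,
      t * dw t - w t =
        (0 * dw 0 - w 0) *
          Real.exp (∫ s in (0 : ℝ)..t, (s / 2) * (1 - (dw s) ^ 2))) ∧
    (∀ t ∈ Set.Ioo T₁ T₂, 0 ≤ ∫ s in (0 : ℝ)..t, (s / 2) * (1 - (dw s) ^ 2)) ∧
    (∀ t ∈ Set.Ioo T₁ T₂, -a ≤ t * dw t - w t) := by
  have h0 : (0:ℝ) ∈ Set.Ioo T₁ T₂ := ⟨hT₁, hT₂⟩
  have hSopen : IsOpen (Set.Ioo T₁ T₂) := isOpen_Ioo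
  have hconv : Convex ℝ (Set.Ioo T₁ T₂) := convex_Ioo _ _
  have hdwc : ContinuousOn dw (Set.Ioo T₁ T₂) := fun t ht =>
    ((hODE t ht).continuousAt).continuousWithinAt
  set h : ℝ → ℝ := fun s => (s / 2) * (1 - (dw s) ^ 2) with hhdef
  have hhc : ContinuousOn h (Set.Ioo T₁ T₂) := by
    exact ((continuousOn_id.div_const 2).mul (continuousOn_const.sub (hdwc.pow 2)))
  have hsub : ∀ t ∈ Set.Ioo T₁ T₂, Set.uIcc (0:ℝ) t ⊆ Set.Ioo T₁ T₂ := fun t ht =>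
    Set.ordConnected_Ioo.uIcc_subset h0 ht
  set F : ℝ → ℝ := fun t => ∫ s in (0:ℝ)..t, h s with hFdef
  have hFint : ∀ t ∈ Set.Ioo T₁ T₂, IntervalIntegrable h MeasureTheory.volume 0 t :=
    fun t ht => (hhc.mono (hsub t ht)).intervalIntegrable
  have hFd : ∀ t ∈ Set.Ioo T₁ T₂, HasDerivAt F (h t) t := fun t ht =>
    intervalIntegral.integral_hasDerivAt_right (hFint t ht)
      (hhc.stronglyMeasurableAtFilter hSopen t ht)
      (hhc.continuousAt (hSopen.mem_nhds ht))
  -- part 1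
  have part1 : ∀ t ∈ Set.Ioo T₁ T₂,
      HasDerivAt (fun t => t * dw t - w t)
        ((t / 2) * (1 - (dw t) ^ 2) * (t * dw t - w t)) t := by
    intro t ht
    have := ((hasDerivAt_id t).mul (hODE t ht)).sub (hw t ht)
    simp only [id_eq] at this
    rw [show (t / 2) * (1 - (dw t) ^ 2) * (t * dw t - w t) = 1 * dw t + t * (1 / 2 * (t * dw t - w t) * (1 - dw t ^ 2)) - dw t by ring]
    exact this
  refine ⟨part1, ?_⟩
  -- part 2
  have part2 : ∀ t ∈ Set.Ioo T₁ T₂,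
      t * dw t - w t = (0 * dw 0 - w 0) * Real.exp (F t) := by
    have hgd : ∀ t ∈ Set.Ioo T₁ T₂,
        HasDerivWithinAt (fun t => (t * dw t - w t) * Real.exp (-F t)) 0 (Set.Ioo T₁ T₂) t := by
      intro t ht
      have hE : HasDerivAt (fun t => Real.exp (-F t)) (-h t * Real.exp (-F t)) t := by
        simpa [mul_comm, Function.comp_def] using (Real.hasDerivAt_exp (-F t)).comp t ((hFd t ht).neg)
      have := (part1 t ht).mul hE
      have h2 : (t / 2) * (1 - (dw t) ^ 2) * (t * dw t - w t) * Real.exp (-F t) +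
          (t * dw t - w t) * (-h t * Real.exp (-F t)) = 0 := by
        simp only [hhdef]; ring
      rw [h2] at this
      exact this.hasDerivWithinAt
    have hconst : ∀ t ∈ Set.Ioo T₁ T₂,
        (t * dw t - w t) * Real.exp (-F t) = (0 * dw 0 - w 0) * Real.exp (-F 0) := by
      intro t ht
      have := hconv.norm_image_sub_le_of_norm_hasDerivWithin_le
        (f' := fun _ => (0:ℝ)) (C := 0) hgd (by intro x hx; simp) ht h0
      have h0' : ‖(0 * dw 0 - w 0) * Real.exp (-F 0) - (t * dw t - w t) * Real.exp (-F t)‖ ≤ 0 := by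
        simpa using this
      have := norm_le_zero_iff.mp h0'
      linarith [sub_eq_zero.mp this]
    intro t ht
    have hF0 : F 0 = 0 := by simp [hFdef]
    have := hconst t ht
    rw [hF0] at this
    have hne : Real.exp (-F t) ≠ 0 := (Real.exp_pos _).ne'
    field_simp [Real.exp_neg] at this ⊢
    rw [neg_zero, Real.exp_zero, mul_one] at this
    rw [← this, mul_assoc, ← Real.exp_add, neg_add_cancel, Real.exp_zero, mul_one]
  refine ⟨fun t ht => part2 t ht, ?_⟩
  -- part 3
  have hsq : ∀ s ∈ Set.Ioo T₁ T₂, (0:ℝ) ≤ 1 - (dw s) ^ 2 := by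
    intro s hs
    have := hspace s hs
    have h1 : (dw s) ^ 2 < 1 := by
      have := abs_lt.mp this
      nlinarith [this.1, this.2]
    linarith
  have part3 : ∀ t ∈ Set.Ioo T₁ T₂, 0 ≤ F t := by
    intro t ht
    rcases le_or_gt 0 t with h0t | ht0
    · apply intervalIntegral.integral_nonneg h0t
      intro s hs
      have hsS : s ∈ Set.Ioo T₁ T₂ := hsub t ht (by
        rw [Set.uIcc_of_le h0t]; exact hs)
      have : (0:ℝ) ≤ s / 2 := by have := hs.1; linarith
      exact mul_nonneg this (hsq s hsS)
    · have hflip : F t = -∫ s in t..(0:ℝ), h s := by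
        simp only [hFdef]
        exact intervalIntegral.integral_symm t 0
      rw [hflip]
      have : (∫ s in t..(0:ℝ), h s) ≤ 0 := by
        have : (0:ℝ) ≤ ∫ s in t..(0:ℝ), -h s := by
          apply intervalIntegral.integral_nonneg ht0.le
          intro s hs
          have hsS : s ∈ Set.Ioo T₁ T₂ := hsub t ht (by
            rw [Set.uIcc_of_ge ht0.le]; exact hs)
          have hs2 : s ≤ 0 := hs.2
          have : h s ≤ 0 := mul_nonpos_of_nonpos_of_nonneg (by linarith) (hsq s hsS)
          linarith
        rw [intervalIntegral.integral_neg] at this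
        linarith
      linarith
  refine ⟨part3, ?_⟩
  -- part 4
  intro t ht
  rw [part2 t ht]
  have hphi0 : 0 * dw 0 - w 0 = -a := by rw [hw0]; ring
  rw [hphi0]
  have h1 : (1:ℝ) ≤ Real.exp (F t) := Real.one_le_exp (part3 t ht)
  nlinarith [h1]
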